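/- Let V be an (n+m)-dimensional vector space over ℚ with basis e_1,…,e_{n+m}, let B̃ be a full-rank (n+m)×n rational matrix, set α_i = Σ_r B̃_{ri} e_r for i ∈ [n]. Let I ⊆ [n] with B̃_{I,I} = 0, and let N(I) ⊆ [n+m]\I be a |I|-element set with B̃_{N(I),I} invertible. Let G^I be the submodule of the exterior algebra Λ(V) generated by ⋀_{i∈I} α_i over the subalgebra generated by {e_j : j ∉ I}. Then the set {(⋀_{a∈A} e_a) ∧ (⋀_{i∈I} α_i) : A ⊆ [n+m] \ (I ∪ N(I))} is a basis of G^I; in particular dim G^I = 2^{n+m−2|I|}. -/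

import Mathlib

open ExteriorAlgebra

section Aux

variable {R M : Type*} [CommRing R] [AddCommGroup M] [Module R M]

lemma prodi_perm {l l' : List M} (h : l.Perm l') :
    (l.map (ι R)).prod = (l'.map (ι R)).prod ∨
      (l.map (ι R)).prod = -(l'.map (ι R)).prod := by
  induction h with
  | nil => exact Or.inl rfl
  | cons x _ ih =>
    simp only [List.map_cons, List.prod_cons]
    rcases ih with h | h
    · exact Or.inl (by rw [h])
    · exact Or.inr (by rw [h, mul_neg])
  | swap x y l =>
    refine Or.inr ?_
    simp only [List.map_cons, List.prod_cons, ← mul_assoc]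
    rw [show (ι R y : ExteriorAlgebra R M) * ι R x = -(ι R x * ι R y) from
      eq_neg_of_add_eq_zero_right (ι_add_mul_swap x y), neg_mul]
  | trans _ _ ih1 ih2 =>
    rcases ih1 with h1 | h1 <;> rcases ih2 with h2 | h2
    · exact Or.inl (h1.trans h2)
    · exact Or.inr (h1.trans h2)
    · exact Or.inr (by rw [h1, h2])
    · exact Or.inl (by rw [h1, h2, neg_neg])

lemma prodi_dup {l : List M} {x : M} (h : List.Duplicate x l) : (l.map (ι R)).prod = 0 := by
  rw [List.duplicate_iff_sublist] at h
  obtain ⟨t, ht⟩ := h.exists_perm_append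
  rcases prodi_perm (R := R) ht with h' | h' <;>
  · rw [h']
    simp [← mul_assoc, ι_sq_zero]

end Aux

section Aux2

variable {d : ℕ} {M : Type*} [AddCommGroup M] [Module ℚ M]

lemma mon_eq_iMulti {k : ℕ} (b : Module.Basis (Fin d) ℚ M) (S : Finset (Fin d)) (h : S.card = k) :
    ((S.sort (· ≤ ·)).map (fun j => ι ℚ (b j))).prod
      = ιMulti ℚ k (fun i => b (S.orderEmbOfFin h i)) := by
  rw [ιMulti_apply]
  congr 1
  apply List.ext_getElem
  · simp [Finset.length_sort, h]
  · intro i h1 h2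
    simp [Finset.orderEmbOfFin_apply]

lemma monomials_li (b : Module.Basis (Fin d) ℚ M) :
    LinearIndependent ℚ (fun S : Finset (Fin d) =>
      ((S.sort (· ≤ ·)).map (fun j => ι ℚ (b j))).prod) := by
  classical
  rw [Fintype.linearIndependent_iff]
  intro g hg S₀
  set p := S₀.card with hp
  let F₀ : (M [⋀^Fin p]→ₗ[ℚ] ℚ) :=
    (Matrix.detRowAlternating : (Fin p → ℚ) [⋀^Fin p]→ₗ[ℚ] ℚ).compLinearMap
      (LinearMap.pi fun i => b.coord (S₀.orderEmbOfFin rfl i))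
  let F : ∀ i : ℕ, M [⋀^Fin i]→ₗ[ℚ] ℚ := Function.update (fun _ => 0) p F₀
  let lam := liftAlternating (R := ℚ) F
  have key : ∀ S : Finset (Fin d),
      lam (((S.sort (· ≤ ·)).map (fun j => ι ℚ (b j))).prod)
        = if S = S₀ then 1 else 0 := by
    intro S
    by_cases hc : S.card = p
    · rw [mon_eq_iMulti b S hc, liftAlternating_apply_ιMulti]
      have hF : F p = F₀ := Function.update_self _ _ _
      rw [hF]
      rw [AlternatingMap.compLinearMap_apply]
      by_cases hSS : S = S₀
      · rw [if_pos hSS]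
        subst hSS
        have he : S.orderEmbOfFin hc = S.orderEmbOfFin rfl := rfl
        rw [he]
        have hid : (fun k => (LinearMap.pi fun i => b.coord (S.orderEmbOfFin rfl i))
            (b (S.orderEmbOfFin rfl k))) = (1 : Matrix (Fin S.card) (Fin S.card) ℚ) := by
          funext k
          funext i
          simp only [Function.comp_apply, LinearMap.pi_apply, Module.Basis.coord_apply, Module.Basis.repr_self,
            Matrix.one_apply, Finsupp.single_apply, EmbeddingLike.apply_eq_iff_eq]
        rw [hid]
        exact Matrix.det_one
      · rw [if_neg hSS]
        have hns : ¬ S ⊆ S₀ := fun hsub =>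
          hSS (Finset.eq_of_subset_of_card_le hsub (by rw [hc]))
        obtain ⟨x, hxS, hxS₀⟩ := Finset.not_subset.1 hns
        obtain ⟨k, hk⟩ : ∃ k, S.orderEmbOfFin hc k = x := by
          have hx' : x ∈ Set.range (S.orderEmbOfFin hc) := by
            rw [Finset.range_orderEmbOfFin]; exact hxS
          exact hx'
        show Matrix.detRowAlternating _ = 0
        show Matrix.det _ = 0
        apply Matrix.det_eq_zero_of_row_eq_zero k
        intro i
        simp only [LinearMap.pi_apply, Module.Basis.coord_apply, Module.Basis.repr_self,
          Finsupp.single_apply, hk]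
        rw [if_neg]
        intro hcon
        exact hxS₀ (hcon ▸ Finset.orderEmbOfFin_mem S₀ rfl i)
    · rw [mon_eq_iMulti b S rfl, liftAlternating_apply_ιMulti]
      have hF : F S.card = 0 := Function.update_of_ne hc _ _
      rw [hF]
      rw [if_neg fun h => hc (by rw [h])]
      rfl
  have h0 := congrArg lam hg
  rw [map_sum, map_zero] at h0
  simp only [map_smul, key, smul_eq_mul, mul_ite, mul_one, mul_zero] at h0
  simpa using h0

end Aux2

set_option maxHeartbeats 2000000 in
/-- With `B̃` a full-column-rank `(n+m)×n` rational matrix,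
`I ⊆ [n]` with `B̃_{I,I} = 0` and `N(I)` a set of `|I|` rows disjoint from `I`
with `B̃_{N(I),I}` invertible, set `α_i = Σ_r B̃_{ri} e_r` and let `G^I` be the
submodule of the exterior algebra generated by `ω = ⋀_{i∈I} α_i` over the
subalgebra generated by `{e_j : j ∉ I}`. Then the elements
`θ(A,I) = (⋀_{a∈A} e_a) ∧ ω` for `A ⊆ [n+m] \ (I ∪ N(I))` form a basis of
`G^I`; in particular `dim G^I = 2^{n+m-2|I|}`. -/
theorem stmt14 (n m : ℕ) (B : Matrix (Fin (n + m)) (Fin n) ℚ)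
    (hrank : LinearIndependent ℚ fun j : Fin n => fun r : Fin (n + m) => B r j)
    (I : Finset (Fin n))
    (hII : ∀ i ∈ I, ∀ j ∈ I, B (Fin.castLE (Nat.le_add_right n m) i) j = 0)
    (N : Finset (Fin (n + m))) (hcard : N.card = I.card)
    (hdisj : ∀ i ∈ I, Fin.castLE (Nat.le_add_right n m) i ∉ N)
    (hinv : (Matrix.det fun r c : Fin I.card =>
      B ((N.orderIsoOfFin hcard r : Fin (n + m)))
        ((I.orderIsoOfFin rfl c : Fin n))) ≠ 0) :
    let e : Fin (n + m) → ExteriorAlgebra ℚ (Fin (n + m) → ℚ) :=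
      fun r => ExteriorAlgebra.ι ℚ (Pi.single r 1)
    let α : Fin n → ExteriorAlgebra ℚ (Fin (n + m) → ℚ) :=
      fun i => ExteriorAlgebra.ι ℚ (fun r => B r i)
    let ω : ExteriorAlgebra ℚ (Fin (n + m) → ℚ) := ((I.sort (· ≤ ·)).map α).prod
    let Iemb : Finset (Fin (n + m)) := I.image (Fin.castLE (Nat.le_add_right n m))
    let GI : Submodule ℚ (ExteriorAlgebra ℚ (Fin (n + m) → ℚ)) :=
      Submodule.span ℚ {z | ∃ y ∈ Algebra.adjoin ℚ (e '' {j | j ∉ Iemb}), z = y * ω}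
    let θ : Finset (Fin (n + m)) → ExteriorAlgebra ℚ (Fin (n + m) → ℚ) :=
      fun A => ((A.sort (· ≤ ·)).map e).prod * ω
    (LinearIndependent ℚ
      fun A : {A : Finset (Fin (n + m)) // A ⊆ (Iemb ∪ N)ᶜ} => θ A.1) ∧
    (Submodule.span ℚ
      (Set.range fun A : {A : Finset (Fin (n + m)) // A ⊆ (Iemb ∪ N)ᶜ} => θ A.1) = GI) ∧
    Module.finrank ℚ GI = 2 ^ (n + m - 2 * I.card) := by
  intro e α ω Iemb GI θ
  classical
  -- basic vector families
  let sv : Fin (n + m) → (Fin (n + m) → ℚ) := fun j => Pi.single j 1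
  let αV : Fin n → (Fin (n + m) → ℚ) := fun i r => B r i
  let NE : Fin I.card ↪o Fin (n + m) := N.orderEmbOfFin hcard
  let IE : Fin I.card ↪o Fin n := I.orderEmbOfFin rfl
  let vb : Fin (n + m) → (Fin (n + m) → ℚ) := fun j =>
    if h : j ∈ N then αV (IE ((N.orderIsoOfFin hcard).symm ⟨j, h⟩)) else sv j
  have hNE_mem : ∀ i, NE i ∈ N := fun i => Finset.orderEmbOfFin_mem N hcard i
  have hIE_mem : ∀ i, IE i ∈ I := fun i => Finset.orderEmbOfFin_mem I rfl i
  have hvbN : ∀ i, vb (NE i) = αV (IE i) := by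
    intro i
    have h := hNE_mem i
    simp only [vb, dif_pos h]
    congr 2
    have h2 : (⟨NE i, h⟩ : {x // x ∈ N}) = N.orderIsoOfFin hcard i := by
      apply Subtype.ext
      simp [NE, Finset.coe_orderIsoOfFin_apply]
    rw [h2, OrderIso.symm_apply_apply]
  have hvb_not : ∀ j ∉ N, vb j = sv j := fun j hj => dif_neg hj
  have hNE_surj : ∀ j ∈ N, ∃ i, NE i = j := by
    intro j hj
    have hx' : j ∈ Set.range NE := by
      rw [show Set.range NE = Set.range (N.orderEmbOfFin hcard) from rfl,
        Finset.range_orderEmbOfFin]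
      exact hj
    exact hx'
  have hIemb_notN : ∀ x ∈ Iemb, x ∉ N := by
    intro x hx
    simp only [Iemb, Finset.mem_image] at hx
    obtain ⟨i, hi, rfl⟩ := hx
    exact hdisj i hi
  have hB_Iemb : ∀ x ∈ Iemb, ∀ i ∈ I, B x i = 0 := by
    intro x hx i hi
    simp only [Iemb, Finset.mem_image] at hx
    obtain ⟨i', hi', rfl⟩ := hx
    exact hII i' hi' i hi
  -- linear independence of the new family vb
  have hvb_li : LinearIndependent ℚ vb := by
    rw [Fintype.linearIndependent_iff]
    intro c hc
    have hc'' : ∀ r, ∑ j, c j * vb j r = 0 := by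
      intro r
      have h1 : (∑ j, c j • vb j) r = 0 := by rw [hc]; rfl
      rw [Finset.sum_apply] at h1
      simpa using h1
    have hNmap : N = Finset.univ.map ⟨NE, NE.injective⟩ := by
      ext x
      simp only [Finset.mem_map, Finset.mem_univ, true_and, Function.Embedding.coeFn_mk]
      constructor
      · intro hx
        exact hNE_surj x hx
      · rintro ⟨i, rfl⟩
        exact hNE_mem i
    have hNzero : ∀ i : Fin I.card, c (NE i) = 0 := by
      let M1 : Matrix (Fin I.card) (Fin I.card) ℚ := fun r c' => B (NE r) (IE c')
      have hdet : M1.det ≠ 0 := by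
        have hM1 : M1 = fun r c' => B ((N.orderIsoOfFin hcard r : Fin (n + m)))
            ((I.orderIsoOfFin rfl c' : Fin n)) := by
          funext r c'
          simp [M1, NE, IE, Finset.coe_orderIsoOfFin_apply]
        rw [hM1]
        exact hinv
      have hmv : M1.mulVec (fun i => c (NE i)) = 0 := by
        funext r
        have h0 := hc'' (NE r)
        have hsplit : ∑ j, c j * vb j (NE r) = ∑ j ∈ N, c j * vb j (NE r) := by
          symm
          apply Finset.sum_subset (Finset.subset_univ N)
          intro j _ hj
          rw [hvb_not j hj]
          have : sv j (NE r) = 0 := by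
            simp only [sv]
            rw [Pi.single_apply]
            rw [if_neg]
            intro hcon
            exact hj (hcon ▸ hNE_mem r)
          rw [this, mul_zero]
        rw [hsplit, hNmap, Finset.sum_map] at h0
        simp only [Function.Embedding.coeFn_mk] at h0
        have : ∑ i, c (NE i) * vb (NE i) (NE r) = ∑ i, M1 r i * c (NE i) := by
          apply Finset.sum_congr rfl
          intro i _
          rw [hvbN i, mul_comm]
        rw [this] at h0
        simpa [Matrix.mulVec, dotProduct] using h0
      have := Matrix.eq_zero_of_mulVec_eq_zero hdet hmv
      intro i
      exact congrFun this i
    intro j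
    by_cases hjN : j ∈ N
    · obtain ⟨i, rfl⟩ := hNE_surj j hjN
      exact hNzero i
    · have h0 := hc'' j
      have hsum : ∑ j', c j' * vb j' j = c j := by
        rw [Finset.sum_eq_single j]
        · rw [hvb_not j hjN]
          simp [sv]
        · intro j' _ hne
          by_cases hN' : j' ∈ N
          · obtain ⟨i, rfl⟩ := hNE_surj j' hN'
            rw [hNzero i, zero_mul]
          · rw [hvb_not j' hN']
            have : sv j' j = 0 := by
              simp only [sv]
              rw [Pi.single_apply, if_neg]
              intro hcon
              exact hne hcon.symm
            rw [this, mul_zero]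
        · intro h
          exact absurd (Finset.mem_univ j) h
      rw [hsum] at h0
      exact h0
  -- the basis
  have hfr : Fintype.card (Fin (n + m)) = Module.finrank ℚ (Fin (n + m) → ℚ) := by
    simp
  let b : Module.Basis (Fin (n + m)) ℚ (Fin (n + m) → ℚ) :=
    Module.Basis.mk hvb_li ((hvb_li.span_eq_top_of_card_eq_finrank' hfr).ge)
  have hb : ⇑b = vb := Module.Basis.coe_mk _ _
  -- monomials
  let Mon : Finset (Fin (n + m)) → ExteriorAlgebra ℚ (Fin (n + m) → ℚ) :=
    fun S => ((S.sort (· ≤ ·)).map (fun j => ι ℚ (vb j))).prod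
  have hMon_li : LinearIndependent ℚ Mon := by
    have h := monomials_li b
    simpa only [hb] using h
  -- θ as a product over a list of vectors
  let lA : Finset (Fin (n + m)) → List (Fin (n + m) → ℚ) :=
    fun A => (A.sort (· ≤ ·)).map sv ++ (I.sort (· ≤ ·)).map αV
  have hθ : ∀ A, θ A = ((lA A).map (ι ℚ)).prod := by
    intro A
    show ((A.sort (· ≤ ·)).map e).prod * ω = _
    simp only [lA, List.map_append, List.prod_append, List.map_map]
    rfl
  -- ω as a product over vb-vectors
  have hNlist : (N.sort (· ≤ ·)).map vb = (I.sort (· ≤ ·)).map αV := by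
    apply List.ext_getElem
    · simp [Finset.length_sort, hcard]
    · intro i h1 h2
      rw [List.getElem_map, List.getElem_map]
      have hiN : i < N.card := by simpa [Finset.length_sort] using h1
      have hiI : i < I.card := by simpa [Finset.length_sort] using h2
      have hlN : i < (N.sort (· ≤ ·)).length := by simpa [Finset.length_sort] using hiN
      have hlI : i < (I.sort (· ≤ ·)).length := by simpa [Finset.length_sort] using hiI
      have hgN : (N.sort (· ≤ ·))[i]'hlN = NE ⟨i, hiI⟩ :=
        (Finset.orderEmbOfFin_apply N hcard ⟨i, hiI⟩).symm
      have hgI : (I.sort (· ≤ ·))[i]'hlI = IE ⟨i, hiI⟩ :=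
        (Finset.orderEmbOfFin_apply I rfl ⟨i, hiI⟩).symm
      rw [hgN, hgI, hvbN]
  -- θ is ± a monomial
  have hdisjAN : ∀ A ⊆ (Iemb ∪ N)ᶜ, Disjoint A N := by
    intro A hA
    rw [Finset.disjoint_left]
    intro a ha hN
    have := hA ha
    rw [Finset.mem_compl, Finset.mem_union] at this
    exact this (Or.inr hN)
  have hθpm : ∀ (A : Finset (Fin (n + m))), A ⊆ (Iemb ∪ N)ᶜ →
      θ A = Mon (A ∪ N) ∨ θ A = -Mon (A ∪ N) := by
    intro A hA
    have hlst : lA A = (A.sort (· ≤ ·) ++ N.sort (· ≤ ·)).map vb := by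
      show (A.sort (· ≤ ·)).map sv ++ (I.sort (· ≤ ·)).map αV = _
      rw [List.map_append]
      congr 1
      · apply List.map_congr_left
        intro a ha
        rw [Finset.mem_sort] at ha
        have haN : a ∉ N := by
          have := hA ha
          rw [Finset.mem_compl, Finset.mem_union] at this
          exact fun h => this (Or.inr h)
        exact (hvb_not a haN).symm
      · exact hNlist.symm
    have h1 : θ A = (((A.sort (· ≤ ·) ++ N.sort (· ≤ ·)).map vb).map (ι ℚ)).prod := by
      rw [hθ A, hlst]
    have hperm : (A.sort (· ≤ ·) ++ N.sort (· ≤ ·)).Perm ((A ∪ N).sort (· ≤ ·)) := by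
      rw [← Multiset.coe_eq_coe, ← Multiset.coe_add, Finset.sort_eq, Finset.sort_eq,
        Finset.sort_eq]
      rw [← Finset.disjUnion_eq_union A N (hdisjAN A hA)]
      rfl
    have h2 := prodi_perm (R := ℚ) (hperm.map vb)
    rw [← h1] at h2
    have h3 : (((((A ∪ N)).sort (· ≤ ·)).map vb).map (ι ℚ)).prod = Mon (A ∪ N) := by
      simp only [Mon, List.map_map]
      rfl
    rw [h3] at h2
    exact h2
  -- linear independence of θ
  let f : {A : Finset (Fin (n + m)) // A ⊆ (Iemb ∪ N)ᶜ} → Finset (Fin (n + m)) :=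
    fun A => A.1 ∪ N
  have hf_inj : Function.Injective f := by
    intro A A' h
    apply Subtype.ext
    have h1 : (A.1 ∪ N) \ N = (A'.1 ∪ N) \ N := by rw [show A.1 ∪ N = A'.1 ∪ N from h]
    rwa [Finset.union_sdiff_cancel_right (hdisjAN A.1 A.2),
      Finset.union_sdiff_cancel_right (hdisjAN A'.1 A'.2)] at h1
  have hMonf_li := hMon_li.comp f hf_inj
  let ε : {A : Finset (Fin (n + m)) // A ⊆ (Iemb ∪ N)ᶜ} → ℚˣ :=
    fun A => if θ A.1 = Mon (f A) then 1 else -1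
  have hθε : ∀ A, θ A.1 = (ε A : ℚ) • Mon (f A) := by
    intro A
    by_cases h : θ A.1 = Mon (f A)
    · simp [ε, h]
    · rcases hθpm A.1 A.2 with h' | h'
      · exact absurd h' h
      · simp only [ε, if_neg h, Units.val_neg, Units.val_one, neg_smul, one_smul]
        exact h'
  have hLI : LinearIndependent ℚ
      (fun A : {A : Finset (Fin (n + m)) // A ⊆ (Iemb ∪ N)ᶜ} => θ A.1) := by
    have hli := hMonf_li.units_smul ε
    have heq : (fun A : {A : Finset (Fin (n + m)) // A ⊆ (Iemb ∪ N)ᶜ} => θ A.1)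
        = (ε • (Mon ∘ f)) := by
      funext A
      rw [hθε A]
      rfl
    rw [heq]
    exact hli
  -- spanning
  set W := Submodule.span ℚ
    (Set.range fun A : {A : Finset (Fin (n + m)) // A ⊆ (Iemb ∪ N)ᶜ} => θ A.1) with hWdef
  have hθW : ∀ (A : Finset (Fin (n + m))), A ⊆ (Iemb ∪ N)ᶜ → θ A ∈ W :=
    fun A hA => Submodule.subset_span ⟨⟨A, hA⟩, rfl⟩
  -- key multiplication lemma for j outside Iemb ∪ N
  have hkey₀ : ∀ j, j ∉ Iemb → j ∉ N → ∀ (A : Finset (Fin (n + m))), A ⊆ (Iemb ∪ N)ᶜ →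
      e j * θ A ∈ W := by
    intro j hjI hjN A hA
    have hcons : e j * θ A = (((sv j :: lA A)).map (ι ℚ)).prod := by
      rw [hθ A, List.map_cons, List.prod_cons]
    by_cases hjA : j ∈ A
    · have hdup : List.Duplicate (sv j) (sv j :: lA A) := by
        apply List.Mem.duplicate_cons_self
        apply List.mem_append_left
        exact List.mem_map_of_mem (f := sv) ((Finset.mem_sort _).2 hjA)
      rw [hcons, prodi_dup hdup]
      exact W.zero_mem
    · have hjc : j ∈ (Iemb ∪ N)ᶜ := by
        rw [Finset.mem_compl, Finset.mem_union]
        intro h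
        rcases h with h | h
        · exact hjI h
        · exact hjN h
      have hsub : insert j A ⊆ (Iemb ∪ N)ᶜ := Finset.insert_subset hjc hA
      have hperm : (j :: A.sort (· ≤ ·)).Perm ((insert j A).sort (· ≤ ·)) := by
        rw [← Multiset.coe_eq_coe, Finset.sort_eq]
        show (j ::ₘ (A.sort (· ≤ ·) : Multiset _)) = _
        rw [Finset.sort_eq, Finset.insert_val_of_notMem hjA]
      have hperm2 : ((j :: A.sort (· ≤ ·)).map sv ++ (I.sort (· ≤ ·)).map αV).Perm
          (lA (insert j A)) :=
        (hperm.map sv).append_right _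
      have h4 : (sv j :: lA A) = ((j :: A.sort (· ≤ ·)).map sv ++ (I.sort (· ≤ ·)).map αV) := rfl
      rcases prodi_perm (R := ℚ) hperm2 with h5 | h5
      · rw [hcons, h4, h5, ← hθ]
        exact hθW _ hsub
      · rw [hcons, h4, h5, ← hθ]
        exact W.neg_mem (hθW _ hsub)
  have hkey : ∀ j, j ∉ Iemb → ∀ (A : Finset (Fin (n + m))), A ⊆ (Iemb ∪ N)ᶜ →
      e j * θ A ∈ W := by
    intro j hjI A hA
    by_cases hjN : j ∈ N
    · -- expand e j in the basis vb
      have hrepr : sv j = ∑ u, b.repr (sv j) u • vb u := by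
        conv_lhs => rw [← b.sum_repr (sv j)]
        apply Finset.sum_congr rfl
        intro u _
        rw [hb]
      have hc0 : ∀ u ∈ Iemb, b.repr (sv j) u = 0 := by
        intro u₀ hu₀
        have hu₀N : u₀ ∉ N := hIemb_notN u₀ hu₀
        have h1 : sv j u₀ = ∑ u, b.repr (sv j) u * vb u u₀ := by
          conv_lhs => rw [hrepr]
          rw [Finset.sum_apply]
          simp
        have hLHS : sv j u₀ = 0 := by
          simp only [sv]
          rw [Pi.single_apply, if_neg]
          intro hcon
          exact hu₀N (hcon ▸ hjN)
        have hRHS : ∑ u, b.repr (sv j) u * vb u u₀ = b.repr (sv j) u₀ := by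
          rw [Finset.sum_eq_single u₀]
          · rw [hvb_not u₀ hu₀N]
            simp [sv]
          · intro u _ hne
            by_cases huN : u ∈ N
            · obtain ⟨i, rfl⟩ := hNE_surj u huN
              rw [hvbN i]
              have : αV (IE i) u₀ = 0 := hB_Iemb u₀ hu₀ (IE i) (hIE_mem i)
              rw [this, mul_zero]
            · rw [hvb_not u huN]
              have : sv u u₀ = 0 := by
                simp only [sv]
                rw [Pi.single_apply, if_neg]
                intro hcon
                exact hne hcon.symm
              rw [this, mul_zero]
          · intro h
            exact absurd (Finset.mem_univ u₀) h
        rw [← hRHS, ← h1, hLHS]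
      have hej : e j = ∑ u, b.repr (sv j) u • ι ℚ (vb u) := by
        show ι ℚ (sv j) = _
        conv_lhs => rw [hrepr]
        rw [map_sum]
        apply Finset.sum_congr rfl
        intro u _
        rw [map_smul]
      rw [hej, Finset.sum_mul]
      apply Submodule.sum_mem
      intro u _
      rw [smul_mul_assoc]
      by_cases huI : u ∈ Iemb
      · rw [hc0 u huI, zero_smul]
        exact W.zero_mem
      · by_cases huN : u ∈ N
        · obtain ⟨i, rfl⟩ := hNE_surj u huN
          have hzero : ι ℚ (vb (NE i)) * θ A = 0 := by
            have hcons : ι ℚ (vb (NE i)) * θ A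
                = ((vb (NE i) :: lA A).map (ι ℚ)).prod := by
              rw [hθ A, List.map_cons, List.prod_cons]
            have hdup : List.Duplicate (vb (NE i)) (vb (NE i) :: lA A) := by
              apply List.Mem.duplicate_cons_self
              apply List.mem_append_right
              rw [hvbN i]
              exact List.mem_map_of_mem (f := αV) ((Finset.mem_sort _).2 (hIE_mem i))
            rw [hcons, prodi_dup hdup]
          rw [hzero, smul_zero]
          exact W.zero_mem
        · have : ι ℚ (vb u) = e u := by rw [hvb_not u huN]
          rw [this]
          exact W.smul_mem _ (hkey₀ u huI huN A hA)
    · exact hkey₀ j hjI hjN A hA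
  have mulW : ∀ j, j ∉ Iemb → ∀ X ∈ W, e j * X ∈ W := by
    intro j hj X hX
    refine Submodule.span_induction (p := fun X _ => e j * X ∈ W) ?_ ?_ ?_ ?_ hX
    · rintro x ⟨A, rfl⟩
      exact hkey j hj A.1 A.2
    · show e j * 0 ∈ W
      rw [mul_zero]
      exact W.zero_mem
    · intro x y _ _ hx hy
      show e j * (x + y) ∈ W
      rw [mul_add]
      exact W.add_mem hx hy
    · intro r x _ hx
      show e j * (r • x) ∈ W
      rw [mul_smul_comm]
      exact W.smul_mem r hx
  have hθempty : θ ∅ = ω := by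
    show ((Finset.sort (∅ : Finset (Fin (n + m))) (· ≤ ·)).map e).prod * ω = ω
    rw [Finset.sort_empty]
    simp
  -- the span equality
  have hWGI : W = GI := by
    apply le_antisymm
    · rw [hWdef, Submodule.span_le]
      rintro z ⟨A, rfl⟩
      apply Submodule.subset_span
      refine ⟨((A.1.sort (· ≤ ·)).map e).prod, ?_, rfl⟩
      apply Subalgebra.list_prod_mem
      intro x hx
      simp only [List.mem_map] at hx
      obtain ⟨a, ha, rfl⟩ := hx
      apply Algebra.subset_adjoin
      refine ⟨a, ?_, rfl⟩
      rw [Finset.mem_sort] at ha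
      have := A.2 ha
      rw [Finset.mem_compl, Finset.mem_union] at this
      exact fun h => this (Or.inl h)
    · show Submodule.span ℚ _ ≤ W
      rw [Submodule.span_le]
      rintro z ⟨y, hy, rfl⟩
      have hy' : y ∈ Submodule.span ℚ
          ((Submonoid.closure (e '' {j | j ∉ Iemb}) : Submonoid _) : Set _) := by
        rw [← Algebra.adjoin_eq_span]
        exact hy
      have hlist : ∀ l : List (ExteriorAlgebra ℚ (Fin (n + m) → ℚ)),
          (∀ x ∈ l, x ∈ e '' {j | j ∉ Iemb}) → l.prod * ω ∈ W := by
        intro l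
        induction l with
        | nil =>
          intro _
          rw [List.prod_nil, one_mul, ← hθempty]
          exact hθW ∅ (Finset.empty_subset _)
        | cons x t ih =>
          intro hmem
          obtain ⟨j, hj, rfl⟩ := hmem x List.mem_cons_self
          rw [List.prod_cons, mul_assoc]
          exact mulW j hj _ (ih fun y hy => hmem y (List.mem_cons_of_mem _ hy))
      refine Submodule.span_induction (p := fun y _ => y * ω ∈ W) ?_ ?_ ?_ ?_ hy'
      · intro x hx
        obtain ⟨l, hl, rfl⟩ := Submonoid.exists_list_of_mem_closure hx
        exact hlist l hl
      · show (0 : ExteriorAlgebra ℚ (Fin (n + m) → ℚ)) * ω ∈ W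
        rw [zero_mul]
        exact W.zero_mem
      · intro x y _ _ hx hy
        show (x + y) * ω ∈ W
        rw [add_mul]
        exact W.add_mem hx hy
      · intro r x _ hx
        show (r • x) * ω ∈ W
        rw [smul_mul_assoc]
        exact W.smul_mem r hx
  refine ⟨hLI, hWGI, ?_⟩
  rw [← hWGI, hWdef, finrank_span_eq_card hLI]
  have hIembcard : Iemb.card = I.card :=
    Finset.card_image_of_injective I (Fin.castLE_injective _)
  have hdisj2 : Disjoint Iemb N := by
    rw [Finset.disjoint_left]
    intro x hx
    exact hIemb_notN x hx
  have hKcard : (Iemb ∪ N).card = 2 * I.card := by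
    rw [Finset.card_union_of_disjoint hdisj2, hIembcard, hcard, two_mul]
  have hcompl : ((Iemb ∪ N)ᶜ : Finset (Fin (n + m))).card = n + m - 2 * I.card := by
    rw [Finset.card_compl, hKcard, Fintype.card_fin]
  rw [Fintype.card_of_subtype ((Iemb ∪ N)ᶜ).powerset (fun A => Finset.mem_powerset),
    Finset.card_powerset, hcompl]
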